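/- Let n ≥ 3 be an odd integer. The determinant of the n×n circulant matrix Circ(c₀, c₁, …, c_{n−1}) with c_i = 1 for 0 ≤ i ≤ (n−3)/2 (that is, (n−1)/2 ones) and c_i = 0 for (n−1)/2 ≤ i ≤ n−1 (that is, (n+1)/2 zeros) equals (n−1)/2. -/

import Mathlib

open Matrix Finset

section Aux

variable {n : ℕ} [NeZero n] {ζ : ℂ}

lemma pow_val_mod (h1 : ζ ^ n = 1) (x : ℕ) : ζ ^ (x % n) = ζ ^ x := by
  conv_rhs => rw [← Nat.div_add_mod x n, pow_add, pow_mul, h1, one_pow, one_mul]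

lemma om_add (h1 : ζ ^ n = 1) (a b : ZMod n) :
    ζ ^ ((a + b).val) = ζ ^ a.val * ζ ^ b.val := by
  rw [ZMod.val_add, pow_val_mod h1, pow_add]

lemma om_nat_mul (h1 : ζ ^ n = 1) (t : ℕ) (l : ZMod n) :
    ζ ^ (((t : ZMod n) * l).val) = (ζ ^ l.val) ^ t := by
  induction t with
  | zero => simp
  | succ t ih =>
    have : ((t + 1 : ℕ) : ZMod n) * l = (t : ZMod n) * l + l := by push_cast; ring
    rw [this, om_add h1, ih, pow_succ]

lemma om_mul (h1 : ζ ^ n = 1) (d l : ZMod n) :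
    ζ ^ ((d * l).val) = (ζ ^ l.val) ^ d.val := by
  conv_lhs => rw [← ZMod.natCast_rightInverse d]
  exact om_nat_mul h1 d.val l

/-- The `Fin n ≃ ZMod n` equivalence. -/
def finZMod (n : ℕ) [NeZero n] : Fin n ≃ ZMod n where
  toFun a := (a : ℕ)
  invFun x := ⟨x.val, x.val_lt⟩
  left_inv a := by
    ext
    simp [ZMod.val_natCast_of_lt a.isLt]
  right_inv x := by simp [ZMod.natCast_rightInverse x]

end Aux

section Diag

variable {n : ℕ} [NeZero n] {ζ : ℂ}

lemma circ_mul_W (h1 : ζ ^ n = 1) (v : ZMod n → ℂ) :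
    circulant v * (Matrix.of fun i j : ZMod n => ζ ^ ((i * j).val))
      = (Matrix.of fun i j : ZMod n => ζ ^ ((i * j).val))
        * diagonal (fun k => ∑ d : ZMod n, v d * ζ ^ ((d * (-k)).val)) := by
  ext i k
  rw [Matrix.mul_diagonal, Matrix.mul_apply]
  simp only [Matrix.of_apply, circulant_apply]
  rw [← Equiv.sum_comp (Equiv.subLeft i) (fun j => v (i - j) * ζ ^ ((j * k).val))]
  rw [Finset.mul_sum]
  refine Finset.sum_congr rfl fun d _ => ?_
  simp only [Equiv.subLeft_apply]
  have h2 : i - (i - d) = d := by ring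
  have h3 : (i - d) * k = i * k + d * (-k) := by ring
  rw [h2, h3, om_add h1]
  ring

lemma detW_ne (hζ : IsPrimitiveRoot ζ n) :
    (Matrix.of fun i j : ZMod n => ζ ^ ((i * j).val)).det ≠ 0 := by
  have hre : (Matrix.of fun i j : ZMod n => ζ ^ ((i * j).val)).det
      = (Matrix.vandermonde fun a : Fin n => ζ ^ (a : ℕ)).det := by
    rw [← Matrix.det_submatrix_equiv_self (finZMod n)]
    congr 1
    ext a b
    simp only [Matrix.submatrix_apply, Matrix.of_apply, Matrix.vandermonde_apply, finZMod,
      Equiv.coe_fn_mk]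
    rw [om_mul hζ.pow_eq_one, ZMod.val_natCast_of_lt b.isLt, ← pow_mul,
      ZMod.val_natCast_of_lt a.isLt, mul_comm, pow_mul]
  rw [hre, Matrix.det_vandermonde]
  refine Finset.prod_ne_zero_iff.2 fun i _ => Finset.prod_ne_zero_iff.2 fun j hj => ?_
  rw [Finset.mem_Ioi] at hj
  refine sub_ne_zero_of_ne fun h => ?_
  exact absurd (hζ.pow_inj j.isLt i.isLt h) (by exact_mod_cast Nat.ne_of_gt hj)

lemma det_circulant_eq_prod (hζ : IsPrimitiveRoot ζ n) (v : ZMod n → ℂ) :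
    (circulant v).det = ∏ k : ZMod n, ∑ d : ZMod n, v d * ζ ^ ((d * (-k)).val) := by
  have h := congrArg Matrix.det (circ_mul_W hζ.pow_eq_one v)
  rw [Matrix.det_mul, Matrix.det_mul, Matrix.det_diagonal, mul_comm (circulant v).det] at h
  exact mul_left_cancel₀ (detW_ne hζ) h

end Diag

section Main

lemma sum_zmod_val {n : ℕ} [NeZero n] (g : ℕ → ℂ) :
    ∑ d : ZMod n, g d.val = ∑ t ∈ Finset.range n, g t := by
  rw [← Equiv.sum_comp (finZMod n), ← Fin.sum_univ_eq_sum_range]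
  refine Finset.sum_congr rfl fun a _ => ?_
  simp [finZMod, ZMod.val_natCast_of_lt a.isLt]

theorem stmt3_aux (m : ℕ) (hm : 1 ≤ m) :
    (Matrix.circulant (fun i : ZMod (2 * m + 1) => if i.val < m then (1 : ℤ) else 0)).det
      = m := by
  set n := 2 * m + 1 with hn
  have hn0 : n ≠ 0 := by omega
  haveI : NeZero n := ⟨hn0⟩
  set ζ : ℂ := Complex.exp (2 * Real.pi * Complex.I / n) with hzdef
  have hζ : IsPrimitiveRoot ζ n := Complex.isPrimitiveRoot_exp n hn0
  -- pass to ℂ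
  have hcast : ((Matrix.circulant (fun i : ZMod n => if i.val < m then (1 : ℤ) else 0)).det : ℂ)
      = (circulant (fun i : ZMod n => if i.val < m then (1 : ℂ) else 0)).det := by
    have h := RingHom.map_det (Int.castRingHom ℂ)
      (Matrix.circulant (fun i : ZMod n => if i.val < m then (1 : ℤ) else 0))
    simp only [RingHom.mapMatrix_apply, Matrix.map_circulant, eq_intCast] at h
    rw [h]
    congr 1
    funext i
    simp [Function.comp, apply_ite (Int.cast : ℤ → ℂ)]
  -- eigenvalue for each l
  have hE : ∀ l : ZMod n,
      (∑ d : ZMod n, (if d.val < m then (1:ℂ) else 0) * ζ ^ ((d * l).val))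
        = ∑ t ∈ Finset.range m, (ζ ^ l.val) ^ t := by
    intro l
    have : ∀ d : ZMod n, (if d.val < m then (1:ℂ) else 0) * ζ ^ ((d * l).val)
        = (fun t : ℕ => if t < m then (ζ ^ l.val) ^ t else 0) d.val := by
      intro d
      rw [om_mul hζ.pow_eq_one]
      by_cases h : d.val < m <;> simp [h]
    rw [Finset.sum_congr rfl fun d _ => this d,
      sum_zmod_val (fun t : ℕ => if t < m then (ζ ^ l.val) ^ t else 0)]
    rw [← Finset.sum_subset (Finset.range_subset_range.2 (by omega : m ≤ n))
      (fun t _ ht => by rw [if_neg (by simpa using ht)])]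
    exact Finset.sum_congr rfl fun t ht => if_pos (Finset.mem_range.1 ht)
  set E : ZMod n → ℂ := fun l => ∑ t ∈ Finset.range m, (ζ ^ l.val) ^ t with hEdef
  have hdet : (circulant (fun i : ZMod n => if i.val < m then (1 : ℂ) else 0)).det
      = ∏ l : ZMod n, E l := by
    rw [det_circulant_eq_prod hζ]
    rw [show (∏ k : ZMod n, ∑ d : ZMod n,
        (if d.val < m then (1:ℂ) else 0) * ζ ^ ((d * (-k)).val)) = ∏ k : ZMod n, E (-k) from
      Finset.prod_congr rfl fun k _ => hE (-k)]
    exact Equiv.prod_comp (Equiv.neg (ZMod n)) E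
  have hE0 : E 0 = m := by
    simp [hEdef, ZMod.val_zero]
  set S : Finset (ZMod n) := Finset.univ.erase 0 with hS
  have hsplit : ∏ l : ZMod n, E l = E 0 * ∏ l ∈ S, E l :=
    (Finset.mul_prod_erase Finset.univ E (Finset.mem_univ 0)).symm
  -- the nontrivial eigenvalues multiply to 1
  have hne1 : ∀ l ∈ S, ζ ^ l.val ≠ 1 := by
    intro l hl h
    have hdvd : n ∣ l.val := hζ.dvd_of_pow_eq_one _ h
    have hv0 : l.val = 0 := Nat.eq_zero_of_dvd_of_lt hdvd l.val_lt
    exact (Finset.mem_erase.1 hl).1 (by rwa [ZMod.val_eq_zero] at hv0)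
  have hQ : (∏ l ∈ S, (ζ ^ l.val - 1)) ≠ 0 :=
    Finset.prod_ne_zero_iff.2 fun l hl => sub_ne_zero_of_ne (hne1 l hl)
  have hminv : ((-2 : ZMod n)) * (m : ZMod n) = 1 := by
    have h0 : ((2 * m + 1 : ℕ) : ZMod n) = 0 := by rw [← hn]; exact ZMod.natCast_self n
    push_cast at h0
    linear_combination -h0
  have hmval : ((m : ZMod n)).val = m := ZMod.val_natCast_of_lt (by omega)
  have hu : IsUnit (m : ZMod n) := IsUnit.of_mul_eq_one _ (by rw [mul_comm]; exact hminv)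
  have hu2 : IsUnit (-2 : ZMod n) := IsUnit.of_mul_eq_one _ hminv
  have hbij : ∏ l ∈ S, ((ζ ^ l.val) ^ m - 1) = ∏ l ∈ S, (ζ ^ l.val - 1) := by
    refine Finset.prod_nbij' (fun l => (m : ZMod n) * l) (fun l => (-2 : ZMod n) * l)
      ?_ ?_ ?_ ?_ ?_
    · intro a ha
      exact Finset.mem_erase.2 ⟨fun h => (Finset.mem_erase.1 ha).1 (hu.mul_right_eq_zero.1 h),
        Finset.mem_univ _⟩
    · intro a ha
      exact Finset.mem_erase.2 ⟨fun h => (Finset.mem_erase.1 ha).1 (hu2.mul_right_eq_zero.1 h),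
        Finset.mem_univ _⟩
    · intro a _
      show (-2 : ZMod n) * ((m : ZMod n) * a) = a
      rw [← mul_assoc, hminv, one_mul]
    · intro a _
      show (m : ZMod n) * ((-2 : ZMod n) * a) = a
      rw [← mul_assoc, mul_comm ((m : ZMod n)) ((-2 : ZMod n)), hminv, one_mul]
    · intro a _
      show (ζ ^ a.val) ^ m - 1 = ζ ^ (((m : ZMod n) * a).val) - 1
      rw [om_mul hζ.pow_eq_one, hmval]
  have hPQ : (∏ l ∈ S, E l) * (∏ l ∈ S, (ζ ^ l.val - 1)) = ∏ l ∈ S, (ζ ^ l.val - 1) := by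
    rw [← Finset.prod_mul_distrib]
    rw [Finset.prod_congr rfl fun l _ => geom_sum_mul (ζ ^ l.val) m]
    exact hbij
  have hP : (∏ l ∈ S, E l) = 1 :=
    mul_right_cancel₀ hQ (hPQ.trans (one_mul _).symm)
  have hfin : ((Matrix.circulant (fun i : ZMod n =>
      if i.val < m then (1 : ℤ) else 0)).det : ℂ) = (m : ℂ) := by
    rw [hcast, hdet, hsplit, hE0, hP, mul_one]
  exact_mod_cast hfin

end Main

/-- **Hoshi–Kang–Yamasaki, Lemma 3.6(1).**
Let `n = 2m+1 ≥ 3` be an odd integer.  The determinant of the `n × n` circulant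
matrix whose first column consists of `(n-1)/2 = m` ones followed by `(n+1)/2 = m+1`
zeros equals `(n-1)/2 = m`. -/
theorem stmt3 (m : ℕ) (hm : 1 ≤ m) :
    (Matrix.circulant (fun i : ZMod (2 * m + 1) => if i.val < m then (1 : ℤ) else 0)).det
      = m := by
  exact stmt3_aux m hm
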